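/- For all t > 0 with t ≠ 1, F2'(t) ≥ 0, where F2'(t) = ((3t^4 + 2t^2 + 3)/(8t^4))·ln|(t+1)/(t-1)| - (3t^2+3)/(4t^3). -/
import Mathlib

open Real Finset

private lemma poly_helper (x : ℝ) (h0 : 0 < x) (h1 : x ≤ 0.64) :
    2*x^4*(3+2*x^2+3*x^4) ≤ (1-x)*((128/15) + (128/35)*x^2 + (62/35)*x^4 + (6/7)*x^6) := by
  have h2 : x^2 ≤ 0.4096 := by nlinarith
  have h4 : x^4 ≤ 0.16777216 := by nlinarith
  have hb : (128/15:ℝ) ≤ (128/15) + (128/35)*x^2 + (62/35)*x^4 + (6/7)*x^6 := by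
    nlinarith [pow_pos h0 2, pow_pos h0 4, pow_pos h0 6]
  have hx : (0.36:ℝ) ≤ 1 - x := by linarith
  have hR : (0.36:ℝ)*(128/15) ≤ (1-x)*((128/15) + (128/35)*x^2 + (62/35)*x^4 + (6/7)*x^6) :=
    mul_le_mul hx hb (by positivity) (by linarith)
  nlinarith [mul_le_mul h4 h2 (by positivity) (by norm_num : (0:ℝ) ≤ 0.16777216),
    mul_le_mul h4 h4 (by positivity) (by norm_num : (0:ℝ) ≤ 0.16777216)]

private lemma series_bound (x : ℝ) (h0 : 0 < x) (h1 : x < 1) :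
    2*(x + x^3/3 + x^5/5 + x^7/7) - 2*x^9/(1-x) ≤ Real.log ((1+x)/(1-x)) := by
  have hx : |x| < 1 := by rw [abs_of_pos h0]; exact h1
  have hx' : |(-x)| < 1 := by rwa [abs_neg]
  have A := Real.abs_log_sub_add_sum_range_le hx 8
  have B := Real.abs_log_sub_add_sum_range_le hx' 8
  rw [abs_of_pos h0] at A
  rw [abs_neg, abs_of_pos h0] at B
  simp only [Finset.sum_range_succ, Finset.sum_range_zero] at A B
  rw [abs_le] at A B
  have h1x : (0:ℝ) < 1 - x := by linarith
  rw [Real.log_div (by linarith) (by linarith)]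
  have hlog1 : Real.log (1 - x) ≤ -(x + x^2/2 + x^3/3 + x^4/4 + x^5/5 + x^6/6 + x^7/7 + x^8/8) + x^9/(1-x) := by
    push_cast at A
    nlinarith [A.2]
  have hlog2 : (x - x^2/2 + x^3/3 - x^4/4 + x^5/5 - x^6/6 + x^7/7 - x^8/8) - x^9/(1-x) ≤ Real.log (1 + x) := by
    push_cast at B
    have : 1 - -x = 1 + x := by ring
    rw [this] at B
    nlinarith [B.1]
  have e : 2*x^9/(1-x) = x^9/(1-x) + x^9/(1-x) := by ring
  linarith

private lemma key_log (x : ℝ) (h0 : 0 < x) (h1 : x < 1) :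
    6*x*(1+x^2)/(3+2*x^2+3*x^4) ≤ Real.log ((1+x)/(1-x)) := by
  have hD : (0:ℝ) < 3+2*x^2+3*x^4 := by positivity
  have h1x : (0:ℝ) < 1 - x := by linarith
  rcases le_or_gt x 0.64 with hc | hc
  · refine le_trans ?_ (series_bound x h0 h1)
    have hp := poly_helper x h0 hc
    have hp5 := mul_le_mul_of_nonneg_left hp (pow_pos h0 5).le
    have hrw : 2*(x + x^3/3 + x^5/5 + x^7/7) - 2*x^9/(1-x)
        = (2*(x + x^3/3 + x^5/5 + x^7/7)*(1-x) - 2*x^9)/(1-x) := by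
      field_simp
    rw [hrw, div_le_div_iff₀ hD h1x]
    nlinarith [hp5]
  · have hR : 6*x*(1+x^2)/(3+2*x^2+3*x^4) ≤ 3/2 := by
      rw [div_le_iff₀ hD]
      nlinarith [mul_nonneg (sq_nonneg (1-x)) (by positivity : (0:ℝ) ≤ 9+6*x+9*x^2)]
    refine hR.trans ?_
    have h45 : Real.exp (3/2) ≤ 4.5 := by
      have e3 : Real.exp (3/2) * Real.exp (3/2) = Real.exp 3 := by
        rw [← Real.exp_add]; norm_num
      have he : Real.exp 3 = Real.exp 1 ^ 3 := by
        rw [← Real.exp_nat_mul]; norm_num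
      have h1e := Real.exp_one_lt_d9
      have : Real.exp 1 ^ 3 < 2.7182818286 ^ 3 := by
        exact pow_lt_pow_left₀ h1e (Real.exp_pos 1).le (by norm_num)
      nlinarith [Real.exp_pos (3/2)]
    have hq : (4.5:ℝ) ≤ (1+x)/(1-x) := by
      rw [le_div_iff₀ h1x]; nlinarith
    rw [Real.le_log_iff_exp_le (by positivity)]
    exact h45.trans hq

noncomputable def F2' (t : ℝ) : ℝ :=
  ((3*t^4 + 2*t^2 + 3)/(8*t^4)) * Real.log |(t+1)/(t-1)| - (3*t^2 + 3)/(4*t^3)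

theorem stmt_7 (t : ℝ) (ht : 0 < t) (ht1 : t ≠ 1) : 0 ≤ F2' t := by
  unfold F2'
  have hA : (0:ℝ) < (3*t^4 + 2*t^2 + 3)/(8*t^4) := by positivity
  rcases lt_or_gt_of_ne ht1 with h | h
  · -- t < 1
    have habs : |(t+1)/(t-1)| = (1+t)/(1-t) := by
      rw [abs_div, abs_of_pos (by linarith), abs_of_neg (by linarith)]
      rw [div_eq_div_iff (by linarith) (by linarith)]
      ring
    rw [habs]
    have hk := key_log t ht h
    have hid : (3*t^2 + 3)/(4*t^3) = ((3*t^4 + 2*t^2 + 3)/(8*t^4)) * (6*t*(1+t^2)/(3+2*t^2+3*t^4)) := by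
      field_simp
      ring
    rw [hid]
    have := mul_le_mul_of_nonneg_left hk hA.le
    linarith
  · -- t > 1
    set x := 1/t with hxdef
    have hx0 : 0 < x := by positivity
    have hx1 : x < 1 := by
      rw [hxdef, div_lt_one ht]; exact h
    have habs : |(t+1)/(t-1)| = (1+x)/(1-x) := by
      have ht0 : (t:ℝ) ≠ 0 := ht.ne'
      have htm : (0:ℝ) < t - 1 := by linarith
      rw [abs_of_pos (div_pos (by linarith) htm), hxdef]
      rw [div_eq_div_iff htm.ne' (sub_ne_zero.mpr (by
        intro hcon
        rw [eq_comm, div_eq_one_iff_eq ht0] at hcon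
        exact (by linarith : t ≠ 1) hcon.symm))]
      field_simp
    rw [habs]
    have hk := key_log x hx0 hx1
    have hid : (3*t^2 + 3)/(4*t^3) = ((3*t^4 + 2*t^2 + 3)/(8*t^4)) * (6*x*(1+x^2)/(3+2*x^2+3*x^4)) := by
      rw [hxdef]
      have ht' : t ≠ 0 := ht.ne'
      field_simp
      ring
    rw [hid]
    have := mul_le_mul_of_nonneg_left hk hA.le
    linarith
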